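/- Let ε₀ ∈ (0, 1/2500), let A ≥ 2 be a real number, and let N be an integer large enough that J ≥ 10. Suppose L₁,…,L_{2J+1} are real numbers satisfying L_j ≥ N_{j−J}/(100·A²·N_{j−J−1}) for every 1 ≤ j ≤ 2J+1. Then ∑_{n=1}^{2J+1} 1/log L_n ≤ 1/16000. -/

import Mathlib

open Real

noncomputable section

/-- `J = ⌊(log log N − 4 log(10A) + 2 log ε₀)/(−log(1−ε₀))⌋`. -/
def Jdef (ε₀ A : ℝ) (N : ℕ) : ℤ :=
  ⌊(Real.log (Real.log N) - 4 * Real.log (10 * A) + 2 * Real.log ε₀) /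
      (-(Real.log (1 - ε₀)))⌋

/-- The sequence `N_j`, `−1−J ≤ j ≤ J+1`:
`N_j = N^{(1−ε₀)^{1−j}/(2−ε₀)}` for `j ≤ 1`, `N_j = N^{1−(1−ε₀)^j/(2−ε₀)}` for
`0 ≤ j ≤ J` (the formulas agree for `j = 0, 1`), and `N_{J+1} = N`. -/
def Nseq (ε₀ A : ℝ) (N : ℕ) (j : ℤ) : ℝ :=
  if j ≤ 1 then (N : ℝ) ^ ((1 - ε₀) ^ (1 - j) / (2 - ε₀))
  else if j ≤ Jdef ε₀ A N then (N : ℝ) ^ (1 - (1 - ε₀) ^ j / (2 - ε₀))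
  else (N : ℝ)

lemma Nseq_low (ε₀ A : ℝ) (N : ℕ) {i : ℤ} (h : i ≤ 1) :
    Nseq ε₀ A N i = (N : ℝ) ^ ((1 - ε₀) ^ (1 - i) / (2 - ε₀)) := by
  simp [Nseq, h]

lemma Nseq_mid (ε₀ A : ℝ) (N : ℕ) (hε : 0 < ε₀) (hε1 : ε₀ < 1)
    {i : ℤ} (h1 : 1 ≤ i) (h2 : i ≤ Jdef ε₀ A N) :
    Nseq ε₀ A N i = (N : ℝ) ^ (1 - (1 - ε₀) ^ i / (2 - ε₀)) := by
  have h2ε : (2 - ε₀) ≠ 0 := by intro h; rw [sub_eq_zero] at h; linarith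
  rcases eq_or_lt_of_le h1 with h | h
  · rw [Nseq, if_pos (by omega : i ≤ 1), ← h]
    congr 1
    rw [show (1 : ℤ) - 1 = 0 by ring, zpow_zero, zpow_one]
    field_simp
    ring
  · rw [Nseq, if_neg (by omega), if_pos h2]

lemma Nseq_pos (ε₀ A : ℝ) (N : ℕ) (hN : 0 < (N : ℝ)) (j : ℤ) :
    0 < Nseq ε₀ A N j := by
  rw [Nseq]
  split_ifs <;> first
    | exact Real.rpow_pos_of_pos hN _
    | exact hN

lemma ratio_lower (ε₀ A : ℝ) (N : ℕ) (hε : 0 < ε₀) (hε1 : ε₀ < 1)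
    (hN1 : 1 < (N : ℝ)) (hJ2 : 2 ≤ Jdef ε₀ A N)
    {j : ℤ} (hj1 : 1 - Jdef ε₀ A N ≤ j) (hj2 : j ≤ Jdef ε₀ A N + 1) :
    (N : ℝ) ^ (ε₀ * (1 - ε₀) ^ (j - 1).natAbs / (2 - ε₀)) ≤
      Nseq ε₀ A N j / Nseq ε₀ A N (j - 1) := by
  have hN0 : (0:ℝ) < N := by linarith
  have h1ε : (0:ℝ) < 1 - ε₀ := by linarith
  have h1ne : (1 - ε₀) ≠ 0 := ne_of_gt h1ε
  have h2ε : (0:ℝ) < 2 - ε₀ := by linarith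
  set m : ℕ := (j - 1).natAbs with hm
  rcases le_or_gt j 1 with hc | hc
  · -- j ≤ 1 : both in the first branch
    have hnat : (1 : ℤ) - j = (m : ℤ) := by omega
    rw [Nseq_low ε₀ A N hc, Nseq_low ε₀ A N (by omega), ← Real.rpow_sub hN0]
    apply le_of_eq
    congr 1
    rw [div_sub_div_same]
    congr 1
    rw [show (1 : ℤ) - (j - 1) = (1 - j) + 1 by ring, zpow_add_one₀ h1ne,
      hnat, zpow_natCast]
    ring
  · have hnat : j - 1 = (m : ℤ) := by omega
    rcases le_or_gt j (Jdef ε₀ A N) with hc2 | hc2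
    · -- 2 ≤ j ≤ J
      rw [Nseq_mid ε₀ A N hε hε1 (by omega) hc2,
        Nseq_mid ε₀ A N hε hε1 (by omega) (by omega), ← Real.rpow_sub hN0]
      apply le_of_eq
      congr 1
      have hz : (1 - ε₀) ^ j = (1 - ε₀) ^ (j - 1) * (1 - ε₀) := by
        rw [← zpow_add_one₀ h1ne]; norm_num
      rw [hz, hnat, zpow_natCast]
      field_simp
      ring
    · -- j = J + 1
      have hNJ : Nseq ε₀ A N j = (N : ℝ) := by
        rw [Nseq, if_neg (by omega), if_neg (by omega)]
      have hNJ1 : Nseq ε₀ A N (j - 1) =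
          (N : ℝ) ^ (1 - (1 - ε₀) ^ (m : ℤ) / (2 - ε₀)) := by
        rw [Nseq_mid ε₀ A N hε hε1 (by omega) (by omega), hnat]
      have hkey : (N : ℝ) / (N : ℝ) ^ (1 - (1 - ε₀) ^ (m : ℤ) / (2 - ε₀)) =
          (N : ℝ) ^ ((1 - ε₀) ^ (m : ℤ) / (2 - ε₀)) := by
        rw [div_eq_iff (ne_of_gt (Real.rpow_pos_of_pos hN0 _)),
          ← Real.rpow_add hN0,
          show (1 - ε₀) ^ (m:ℤ) / (2 - ε₀) + (1 - (1 - ε₀) ^ (m:ℤ) / (2 - ε₀))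
            = 1 by ring, Real.rpow_one]
      rw [hNJ, hNJ1, hkey, zpow_natCast]
      apply Real.rpow_le_rpow_of_exponent_le (le_of_lt hN1)
      have hp : (0:ℝ) ≤ (1 - ε₀) ^ m := le_of_lt (pow_pos h1ε _)
      apply div_le_div_of_nonneg_right ?_ h2ε.le
      nlinarith

set_option maxHeartbeats 1000000 in
theorem sum_reciprocal_log_L_bound
    (ε₀ A : ℝ) (hε : 0 < ε₀) (hε' : ε₀ < 1/2500) (hA : 2 ≤ A)
    (N : ℕ) (hJ : 10 ≤ Jdef ε₀ A N)
    (L : ℕ → ℝ)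
    (hL : ∀ j : ℕ, 1 ≤ j → (j : ℤ) ≤ 2 * Jdef ε₀ A N + 1 →
      Nseq ε₀ A N ((j : ℤ) - Jdef ε₀ A N) /
          (100 * A^2 * Nseq ε₀ A N ((j : ℤ) - Jdef ε₀ A N - 1)) ≤ L j) :
    ∑ n ∈ Finset.Icc 1 (2 * Jdef ε₀ A N + 1).toNat, 1 / Real.log (L n) ≤ 1/16000 := by
  have hε1 : ε₀ < 1 := by linarith
  have h1ε : (0:ℝ) < 1 - ε₀ := by linarith
  have h1ε' : 1 - ε₀ < 1 := by linarith
  have h1ne : (1 - ε₀) ≠ 0 := ne_of_gt h1ε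
  have h2ε : (0:ℝ) < 2 - ε₀ := by linarith
  have hA0 : (0:ℝ) < A := by linarith
  have h10A : (1:ℝ) < 10 * A := by linarith
  have hA2 : (4:ℝ) ≤ A ^ 2 := by nlinarith
  have hA4 : (160000:ℝ) ≤ (10 * A) ^ 4 := by nlinarith
  set J : ℤ := Jdef ε₀ A N with hJdef
  have hJ0 : (0:ℤ) ≤ J := by linarith
  set Jn : ℕ := J.toNat with hJn
  have hJcast : (Jn : ℤ) = J := Int.toNat_of_nonneg hJ0
  have hT : (2 * J + 1).toNat = 2 * Jn + 1 := by omega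
  -- basic log facts
  have hlog1ε : Real.log (1 - ε₀) < 0 := Real.log_neg h1ε h1ε'
  have hden : 0 < -Real.log (1 - ε₀) := by linarith
  have hlogε : Real.log ε₀ < 0 := Real.log_neg hε hε1
  have hlog10A : 0 < Real.log (10 * A) := Real.log_pos h10A
  have hfloor : (J : ℝ) ≤ (Real.log (Real.log N) - 4 * Real.log (10 * A)
      + 2 * Real.log ε₀) / (-(Real.log (1 - ε₀))) := by
    rw [hJdef, Jdef]; exact Int.floor_le _
  have hJR : (10:ℝ) ≤ (J:ℝ) := by exact_mod_cast hJ
  have hnum : (J : ℝ) * (-(Real.log (1 - ε₀))) ≤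
      Real.log (Real.log N) - 4 * Real.log (10 * A) + 2 * Real.log ε₀ :=
    (le_div_iff₀ hden).mp hfloor
  have hloglogN : 0 < Real.log (Real.log N) := by nlinarith
  have hlogN : 1 < Real.log N := by
    by_contra h
    push_neg at h
    have h0 : (0:ℝ) ≤ Real.log N := by
      rcases Nat.eq_zero_or_pos N with h' | h'
      · simp [h']
      · exact Real.log_natCast_nonneg N
    have := Real.log_nonpos h0 h
    linarith
  have hlogN0 : (0:ℝ) < Real.log N := by linarith
  have hN1 : (1:ℝ) < N := by
    by_contra h
    push_neg at h
    have := Real.log_nonpos (by positivity) h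
    linarith
  have hN0 : (0:ℝ) < N := by linarith
  -- key inequality : (10A)^4/ε₀² ≤ (1-ε₀)^Jn * log N
  have hkey : (10 * A) ^ 4 / ε₀ ^ 2 ≤ (1 - ε₀) ^ Jn * Real.log N := by
    have hc : ((Jn : ℕ) : ℝ) = (J : ℝ) := by exact_mod_cast hJcast
    have h1 : 4 * Real.log (10 * A) - 2 * Real.log ε₀ - Real.log (Real.log N)
        ≤ (Jn : ℝ) * Real.log (1 - ε₀) := by
      rw [hc]; nlinarith [hnum]
    have h2 : Real.exp ((Jn : ℝ) * Real.log (1 - ε₀)) = (1 - ε₀) ^ Jn := by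
      rw [Real.exp_nat_mul, Real.exp_log h1ε]
    have h3 : Real.exp (4 * Real.log (10 * A) - 2 * Real.log ε₀
        - Real.log (Real.log N)) = (10 * A) ^ 4 / (ε₀ ^ 2 * Real.log N) := by
      rw [show (4:ℝ) * Real.log (10 * A) = Real.log ((10 * A) ^ 4) by
          rw [Real.log_pow]; push_cast; ring,
        show (2:ℝ) * Real.log ε₀ = Real.log (ε₀ ^ 2) by
          rw [Real.log_pow]; push_cast; ring,
        Real.exp_sub, Real.exp_sub, Real.exp_log (by positivity),
        Real.exp_log (by positivity), Real.exp_log hlogN0, div_div]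
    have h4 : (10 * A) ^ 4 / (ε₀ ^ 2 * Real.log N) ≤ (1 - ε₀) ^ Jn := by
      rw [← h2, ← h3]; exact Real.exp_le_exp.mpr h1
    have h5 := mul_le_mul_of_nonneg_right h4 (le_of_lt hlogN0)
    have h6 : (10 * A) ^ 4 / (ε₀ ^ 2 * Real.log N) * Real.log N
        = (10 * A) ^ 4 / ε₀ ^ 2 := by
      field_simp
    linarith [h6 ▸ h5]
  -- per-term bound
  have hterm : ∀ n ∈ Finset.Icc 1 (2 * Jn + 1),
      1 / Real.log (L n) ≤
        20 / 9 * ((1 - ε₀)⁻¹) ^ ((n : ℤ) - J - 1).natAbs / (ε₀ * Real.log N) := by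
    intro n hn
    obtain ⟨hn1, hn2⟩ := Finset.mem_Icc.mp hn
    set k : ℕ := ((n : ℤ) - J - 1).natAbs with hk
    have hkJ : k ≤ Jn := by omega
    have hpk : (0:ℝ) < (1 - ε₀) ^ k := pow_pos h1ε k
    have hratio := ratio_lower ε₀ A N hε hε1 hN1 (by omega)
      (j := (n : ℤ) - J) (by omega) (by omega)
    have hLn : (N : ℝ) ^ (ε₀ * (1 - ε₀) ^ k / (2 - ε₀)) / (100 * A ^ 2) ≤ L n := by
      have hhl := hL n hn1 (by omega)
      have hpos1 : 0 < Nseq ε₀ A N ((n : ℤ) - J - 1) := Nseq_pos ε₀ A N hN0 _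
      have hpos2 : 0 < Nseq ε₀ A N ((n : ℤ) - J) := Nseq_pos ε₀ A N hN0 _
      have heq : Nseq ε₀ A N ((n : ℤ) - J) /
          (100 * A ^ 2 * Nseq ε₀ A N ((n : ℤ) - J - 1))
          = Nseq ε₀ A N ((n : ℤ) - J) / Nseq ε₀ A N ((n : ℤ) - J - 1)
            / (100 * A ^ 2) := by
        rw [div_div, mul_comm]
      calc (N : ℝ) ^ (ε₀ * (1 - ε₀) ^ k / (2 - ε₀)) / (100 * A ^ 2)
          ≤ Nseq ε₀ A N ((n : ℤ) - J) / Nseq ε₀ A N ((n : ℤ) - J - 1)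
            / (100 * A ^ 2) :=
            div_le_div_of_nonneg_right hratio (by positivity)
        _ = Nseq ε₀ A N ((n : ℤ) - J) /
            (100 * A ^ 2 * Nseq ε₀ A N ((n : ℤ) - J - 1)) := heq.symm
        _ ≤ L n := hhl
    have hPpos : (0:ℝ) < (N : ℝ) ^ (ε₀ * (1 - ε₀) ^ k / (2 - ε₀)) / (100 * A ^ 2) := by
      positivity
    have hlogLn : ε₀ * (1 - ε₀) ^ k / (2 - ε₀) * Real.log N
        - Real.log (100 * A ^ 2) ≤ Real.log (L n) := by
      have h := Real.log_le_log hPpos hLn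
      rwa [Real.log_div (by positivity) (by positivity), Real.log_rpow hN0] at h
    have hW0 : (0:ℝ) < (1 - ε₀) ^ k * Real.log N := mul_pos hpk hlogN0
    -- bound on log(100 A²)
    have hB : 20 * Real.log (100 * A ^ 2) ≤ ε₀ * ((1 - ε₀) ^ k * Real.log N) := by
      have hmono : (1 - ε₀) ^ Jn ≤ (1 - ε₀) ^ k :=
        pow_le_pow_of_le_one (le_of_lt h1ε) (le_of_lt h1ε') hkJ
      have h1 : (10 * A) ^ 4 / ε₀ ^ 2 ≤ (1 - ε₀) ^ k * Real.log N := by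
        calc (10 * A) ^ 4 / ε₀ ^ 2 ≤ (1 - ε₀) ^ Jn * Real.log N := hkey
          _ ≤ (1 - ε₀) ^ k * Real.log N :=
            mul_le_mul_of_nonneg_right hmono (le_of_lt hlogN0)
      have h2 : (10 * A) ^ 4 ≤ ε₀ ^ 2 * ((1 - ε₀) ^ k * Real.log N) := by
        rw [div_le_iff₀ (by positivity)] at h1
        linarith [h1]
      have he : ε₀ ^ 2 * ((1 - ε₀) ^ k * Real.log N)
          = ε₀ * (ε₀ * ((1 - ε₀) ^ k * Real.log N)) := by ring
      have h2' : (10 * A) ^ 4 ≤ ε₀ * (ε₀ * ((1 - ε₀) ^ k * Real.log N)) := by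
        linarith [h2, he.symm.le, he.le]
      have hup : ε₀ * (ε₀ * ((1 - ε₀) ^ k * Real.log N))
          ≤ (1/2500) * (ε₀ * ((1 - ε₀) ^ k * Real.log N)) :=
        mul_le_mul_of_nonneg_right (le_of_lt hε') (by positivity)
      have h3 : 2500 * (10 * A) ^ 4 ≤ ε₀ * ((1 - ε₀) ^ k * Real.log N) := by
        linarith
      have h4 : Real.log (100 * A ^ 2) ≤ 100 * A ^ 2 - 1 :=
        Real.log_le_sub_one_of_pos (by positivity)
      have hAA : 4 * A ^ 2 ≤ A ^ 2 * A ^ 2 :=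
        mul_le_mul_of_nonneg_right hA2 (by positivity)
      have hexp : (10 * A) ^ 4 = 10000 * (A ^ 2 * A ^ 2) := by ring
      nlinarith [h3, h4, hAA, hexp.le, hexp.symm.le]
    have hhalf : ε₀ * ((1 - ε₀) ^ k * Real.log N) / 2
        ≤ ε₀ * (1 - ε₀) ^ k / (2 - ε₀) * Real.log N := by
      rw [show ε₀ * (1 - ε₀) ^ k / (2 - ε₀) * Real.log N
          = ε₀ * ((1 - ε₀) ^ k * Real.log N) / (2 - ε₀) by ring,
        div_le_div_iff₀ two_pos h2ε]
      nlinarith [mul_nonneg (mul_pos hε hW0).le hε.le]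
    have hC : 9 / 20 * (ε₀ * ((1 - ε₀) ^ k * Real.log N)) ≤ Real.log (L n) := by
      linarith [hlogLn, hB, hhalf]
    have hCpos : (0:ℝ) < 9 / 20 * (ε₀ * ((1 - ε₀) ^ k * Real.log N)) := by
      positivity
    have h1d : 1 / Real.log (L n)
        ≤ 1 / (9 / 20 * (ε₀ * ((1 - ε₀) ^ k * Real.log N))) :=
      one_div_le_one_div_of_le hCpos hC
    have heqf : 1 / (9 / 20 * (ε₀ * ((1 - ε₀) ^ k * Real.log N)))
        = 20 / 9 * ((1 - ε₀)⁻¹) ^ k / (ε₀ * Real.log N) := by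
      rw [inv_pow]
      rw [div_eq_div_iff (by positivity) (by positivity)]
      field_simp
    rw [← heqf]
    exact h1d
  -- geometric sum bound
  set r : ℝ := (1 - ε₀)⁻¹ with hr
  have hr1 : 1 < r := by
    rw [hr]
    exact (one_lt_inv₀ h1ε).2 h1ε'
  have hrne : r ≠ 1 := ne_of_gt hr1
  have hr0 : (0:ℝ) < r := by linarith
  have hG : ∑ i ∈ Finset.range (Jn + 1), r ^ i ≤ r ^ Jn / ε₀ := by
    rw [geom_sum_eq hrne]
    rw [div_le_div_iff₀ (by linarith) hε]
    have hre : r - 1 = ε₀ * r := by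
      rw [hr]; field_simp; ring
    rw [hre, pow_succ]
    nlinarith [pow_pos hr0 Jn]
  have hsum : ∑ n ∈ Finset.Icc 1 (2 * Jn + 1), r ^ ((n : ℤ) - J - 1).natAbs
      ≤ 2 * (r ^ Jn / ε₀) := by
    have hIcc : Finset.Icc 1 (2 * Jn + 1) = Finset.Ioc 0 (2 * Jn + 1) := by
      rw [← Finset.Icc_add_one_left_eq_Ioc]; rfl
    have hsplit := Finset.sum_Ioc_consecutive
      (f := fun n : ℕ => r ^ ((n : ℤ) - J - 1).natAbs)
      (Nat.zero_le (Jn + 1)) (by omega : Jn + 1 ≤ 2 * Jn + 1)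
    have hS1 : ∑ n ∈ Finset.Ioc 0 (Jn + 1), r ^ ((n : ℤ) - J - 1).natAbs
        = ∑ i ∈ Finset.range (Jn + 1), r ^ i := by
      rw [← Finset.Icc_add_one_left_eq_Ioc, ← Finset.Ico_add_one_right_eq_Icc, Finset.sum_Ico_eq_sum_range]
      have h2 : Jn + 1 + 1 - (0 + 1) = Jn + 1 := by omega
      rw [h2]
      have hc : ∀ i ∈ Finset.range (Jn + 1),
          r ^ (((0 + 1 + i : ℕ) : ℤ) - J - 1).natAbs = r ^ (Jn + 1 - 1 - i) := by
        intro i hi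
        simp only [Finset.mem_range] at hi
        congr 1
        omega
      rw [Finset.sum_congr rfl hc, Finset.sum_range_reflect]
    have hS2 : ∑ n ∈ Finset.Ioc (Jn + 1) (2 * Jn + 1), r ^ ((n : ℤ) - J - 1).natAbs
        ≤ ∑ i ∈ Finset.range (Jn + 1), r ^ i := by
      rw [← Finset.Icc_add_one_left_eq_Ioc, ← Finset.Ico_add_one_right_eq_Icc, Finset.sum_Ico_eq_sum_range]
      have h2 : 2 * Jn + 1 + 1 - (Jn + 1 + 1) = Jn := by omega
      rw [h2]
      have hc : ∀ i ∈ Finset.range Jn,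
          r ^ (((Jn + 1 + 1 + i : ℕ) : ℤ) - J - 1).natAbs = r ^ (i + 1) := by
        intro i hi
        congr 1
        omega
      rw [Finset.sum_congr rfl hc]
      have h3 := Finset.sum_range_succ' (fun i => r ^ i) Jn
      rw [h3]
      nlinarith [pow_pos hr0 0]
    calc ∑ n ∈ Finset.Icc 1 (2 * Jn + 1), r ^ ((n : ℤ) - J - 1).natAbs
        = ∑ n ∈ Finset.Ioc 0 (Jn + 1), r ^ ((n : ℤ) - J - 1).natAbs
          + ∑ n ∈ Finset.Ioc (Jn + 1) (2 * Jn + 1), r ^ ((n : ℤ) - J - 1).natAbs := by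
          rw [hIcc, ← hsplit]
      _ ≤ ∑ i ∈ Finset.range (Jn + 1), r ^ i + ∑ i ∈ Finset.range (Jn + 1), r ^ i := by
          rw [hS1]; linarith [hS2]
      _ ≤ 2 * (r ^ Jn / ε₀) := by linarith [hG]
  -- assemble
  rw [hT]
  calc ∑ n ∈ Finset.Icc 1 (2 * Jn + 1), 1 / Real.log (L n)
      ≤ ∑ n ∈ Finset.Icc 1 (2 * Jn + 1),
        20 / 9 * r ^ ((n : ℤ) - J - 1).natAbs / (ε₀ * Real.log N) :=
        Finset.sum_le_sum hterm
    _ = 20 / 9 / (ε₀ * Real.log N)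
        * ∑ n ∈ Finset.Icc 1 (2 * Jn + 1), r ^ ((n : ℤ) - J - 1).natAbs := by
        rw [Finset.mul_sum]
        apply Finset.sum_congr rfl
        intro n _
        ring
    _ ≤ 20 / 9 / (ε₀ * Real.log N) * (2 * (r ^ Jn / ε₀)) := by
        apply mul_le_mul_of_nonneg_left hsum (by positivity)
    _ ≤ 1 / 16000 := by
        have h2 : (10 * A) ^ 4 ≤ ε₀ ^ 2 * ((1 - ε₀) ^ Jn * Real.log N) := by
          rw [div_le_iff₀ (by positivity)] at hkey
          linarith [hkey]
        have hprod : (1 - ε₀) ^ Jn * r ^ Jn = 1 := by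
          rw [hr, inv_pow, mul_inv_cancel₀ (by positivity)]
        have hkey2 : (10 * A) ^ 4 * r ^ Jn ≤ ε₀ ^ 2 * Real.log N := by
          have h5 := mul_le_mul_of_nonneg_right h2 (le_of_lt (pow_pos hr0 Jn))
          calc (10 * A) ^ 4 * r ^ Jn
              ≤ ε₀ ^ 2 * ((1 - ε₀) ^ Jn * Real.log N) * r ^ Jn := h5
            _ = ε₀ ^ 2 * Real.log N * ((1 - ε₀) ^ Jn * r ^ Jn) := by ring
            _ = ε₀ ^ 2 * Real.log N := by rw [hprod]; ring
        have heq : 20 / 9 / (ε₀ * Real.log N) * (2 * (r ^ Jn / ε₀))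
            = 40 * r ^ Jn / (9 * (ε₀ ^ 2 * Real.log N)) := by
          field_simp
          ring
        rw [heq, div_le_div_iff₀ (by positivity) (by norm_num)]
        nlinarith [pow_pos hr0 Jn, hkey2, hA4]

end
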